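/- Let τ_ρ be the unique minimizer over L²_P(X,T) of F(h) = ‖Π(h) - τ̃‖²_{L²_P} + ρ‖h‖²_{L²_P}, where Π(h)(x,t) = h(x,t) - E{h(X,T)|X=x} and τ̃(x,t) = τ(x,t) - E{τ(X,T)|X=x}. Then ‖Π(τ_ρ) - τ̃‖²_{L²_P} ≤ ρ‖τ̃‖²_{L²_P} and ‖τ_ρ - τ̃‖²_{L²_P} ≤ 2‖τ̃‖_{L²_P}·‖Π(τ_ρ) - τ̃‖_{L²_P}; in particular ‖τ_ρ - τ̃‖_{L²_P} = O(ρ^{1/4}) and τ_ρ → τ̃ in L²_P as ρ → 0. -/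

import Mathlib

open MeasureTheory Filter

private lemma memLp_two_condexp {Ω : Type*} {mX : MeasurableSpace Ω} {m0 : MeasurableSpace Ω}
    {μ : Measure Ω} [IsFiniteMeasure μ] (hle : mX ≤ m0) {f : Ω → ℝ}
    (hf : MemLp f 2 μ) : MemLp (μ[f|mX]) 2 μ := by
  set g : Lp ℝ 2 μ := (condExpL2 ℝ ℝ hle (hf.toLp f) : Lp ℝ 2 μ) with hg
  have hg_meas : AEStronglyMeasurable[mX] (g : Ω → ℝ) μ := lpMeas.aestronglyMeasurable _
  have hgL2 : MemLp (g : Ω → ℝ) 2 μ := Lp.memLp g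
  have hae : (g : Ω → ℝ) =ᵐ[μ] μ[f|mX] :=
    ae_eq_condExp_of_forall_setIntegral_eq hle (hf.integrable one_le_two)
      (fun s _ _ => (hgL2.integrable one_le_two).integrableOn)
      (fun s hs hμs => by
        rw [integral_condExpL2_eq_of_fin_meas_real (hm := hle) (hf.toLp f) hs hμs.ne]
        exact setIntegral_congr_ae (hle s hs) ((hf.coeFn_toLp).mono fun ω hω _ => hω))
      hg_meas
  exact hgL2.ae_eq hae

private lemma integrable_mul_of_memLp_two {Ω : Type*} {m0 : MeasurableSpace Ω} {μ : Measure Ω}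
    {f g : Ω → ℝ} (hf : MemLp f 2 μ) (hg : MemLp g 2 μ) :
    Integrable (fun ω => f ω * g ω) μ := by
  have h1 := (hf.add hg).integrable_sq
  have h2 := hf.integrable_sq
  have h3 := hg.integrable_sq
  have heq : (fun ω => f ω * g ω)
      = fun ω => ((f ω + g ω) ^ 2 - f ω ^ 2 - g ω ^ 2) / 2 := funext fun ω => by ring
  rw [heq]
  exact ((h1.sub h2).sub h3).div_const 2

/-- **Tikhonov approximation bounds for the regularized R-loss minimizer.**
Let `τ̃ = τ − E{τ|X}` and, for each `ρ > 0`, let `τ_ρ` minimize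
`F_ρ(h) = ‖Π h − τ̃‖²_{L²} + ρ ‖h‖²_{L²}` over `L²_P(X,T)`, where `Π h = h − E{h|X}`.
Then `‖Π τ_ρ − τ̃‖² ≤ ρ ‖τ̃‖²` and `‖τ_ρ − τ̃‖² ≤ 2 ‖τ̃‖ ‖Π τ_ρ − τ̃‖`;
in particular `‖τ_ρ − τ̃‖² ≤ 2 √ρ ‖τ̃‖²` (so `‖τ_ρ − τ̃‖ = O(ρ^{1/4})`) and
`τ_ρ → τ̃` in `L²` as `ρ → 0⁺`. -/
theorem tikhonov_minimizer_approximates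
    {Ω : Type*} {m0 : MeasurableSpace Ω} (μ : Measure Ω) [IsProbabilityMeasure μ]
    (mX : MeasurableSpace Ω) (hle : mX ≤ m0)
    (τ : Ω → ℝ) (hτ : MemLp τ 2 μ)
    (ttau : Ω → ℝ) (httau : ttau = fun ω => τ ω - (μ[τ|mX]) ω)
    (tρ : ℝ → Ω → ℝ)
    (htρL2 : ∀ ρ : ℝ, 0 < ρ → MemLp (tρ ρ) 2 μ)
    (htρmin : ∀ ρ : ℝ, 0 < ρ → ∀ h : Ω → ℝ, MemLp h 2 μ →
      (∫ ω, (tρ ρ ω - (μ[tρ ρ|mX]) ω - ttau ω) ^ 2 ∂μ + ρ * ∫ ω, tρ ρ ω ^ 2 ∂μ)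
        ≤ (∫ ω, (h ω - (μ[h|mX]) ω - ttau ω) ^ 2 ∂μ + ρ * ∫ ω, h ω ^ 2 ∂μ)) :
    (∀ ρ : ℝ, 0 < ρ →
      (∫ ω, (tρ ρ ω - (μ[tρ ρ|mX]) ω - ttau ω) ^ 2 ∂μ ≤ ρ * ∫ ω, ttau ω ^ 2 ∂μ)
      ∧ (∫ ω, (tρ ρ ω - ttau ω) ^ 2 ∂μ
          ≤ 2 * Real.sqrt (∫ ω, ttau ω ^ 2 ∂μ)
              * Real.sqrt (∫ ω, (tρ ρ ω - (μ[tρ ρ|mX]) ω - ttau ω) ^ 2 ∂μ))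
      ∧ (∫ ω, (tρ ρ ω - ttau ω) ^ 2 ∂μ
          ≤ 2 * Real.sqrt ρ * ∫ ω, ttau ω ^ 2 ∂μ))
    ∧ Tendsto (fun ρ : ℝ => ∫ ω, (tρ ρ ω - ttau ω) ^ 2 ∂μ)
        (nhdsWithin 0 (Set.Ioi 0)) (nhds 0) := by
  have httau' : ttau = τ - μ[τ|mX] := httau
  have httauL2 : MemLp ttau 2 μ := by
    rw [httau']; exact hτ.sub (memLp_two_condexp hle hτ)
  have hB0 : 0 ≤ ∫ ω, ttau ω ^ 2 ∂μ := integral_nonneg fun ω => sq_nonneg _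
  -- conditional expectation of ttau vanishes
  have httau0 : μ[ttau|mX] =ᵐ[μ] 0 := by
    rw [httau']
    have h1 : μ[τ - μ[τ|mX]|mX] =ᵐ[μ] μ[τ|mX] - μ[μ[τ|mX]|mX] :=
      condExp_sub (hτ.integrable one_le_two) integrable_condExp mX
    have h2 : μ[μ[τ|mX]|mX] =ᵐ[μ] μ[τ|mX] := condExp_condExp_of_le le_rfl hle
    filter_upwards [h1, h2] with ω hω1 hω2
    simp only [Pi.sub_apply, Pi.zero_apply] at *
    rw [hω1, hω2, sub_self]
  -- key bounds for each ρ > 0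
  have key : ∀ ρ : ℝ, 0 < ρ →
      (∫ ω, (tρ ρ ω - (μ[tρ ρ|mX]) ω - ttau ω) ^ 2 ∂μ ≤ ρ * ∫ ω, ttau ω ^ 2 ∂μ)
      ∧ (∫ ω, (tρ ρ ω - ttau ω) ^ 2 ∂μ
          = ∫ ω, (tρ ρ ω - (μ[tρ ρ|mX]) ω - ttau ω) ^ 2 ∂μ)
      ∧ (∫ ω, (tρ ρ ω - (μ[tρ ρ|mX]) ω - ttau ω) ^ 2 ∂μ ≤ ∫ ω, ttau ω ^ 2 ∂μ) := by
    intro ρ hρ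
    have hf : MemLp (tρ ρ) 2 μ := htρL2 ρ hρ
    have hE : MemLp (μ[tρ ρ|mX]) 2 μ := memLp_two_condexp hle hf
    have hA0 : 0 ≤ ∫ ω, (tρ ρ ω - (μ[tρ ρ|mX]) ω - ttau ω) ^ 2 ∂μ :=
      integral_nonneg fun ω => sq_nonneg _
    have hf2_0 : 0 ≤ ∫ ω, tρ ρ ω ^ 2 ∂μ := integral_nonneg fun ω => sq_nonneg _
    -- bound 1 : plug in h = ttau
    have hb1 : ∫ ω, (tρ ρ ω - (μ[tρ ρ|mX]) ω - ttau ω) ^ 2 ∂μ ≤ ρ * ∫ ω, ttau ω ^ 2 ∂μ := by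
      have hmin := htρmin ρ hρ ttau httauL2
      have hz : ∫ ω, (ttau ω - (μ[ttau|mX]) ω - ttau ω) ^ 2 ∂μ = 0 := by
        rw [show (0:ℝ) = ∫ (_ : Ω), (0:ℝ) ∂μ by simp]
        refine integral_congr_ae ?_
        filter_upwards [httau0] with ω hω
        simp [hω]
      rw [hz, zero_add] at hmin
      nlinarith [mul_nonneg hρ.le hf2_0]
    -- bound 0 : plug in h = 0
    have hb0 : ∫ ω, (tρ ρ ω - (μ[tρ ρ|mX]) ω - ttau ω) ^ 2 ∂μ ≤ ∫ ω, ttau ω ^ 2 ∂μ := by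
      have hmin := htρmin ρ hρ (0 : Ω → ℝ) MemLp.zero
      have hz1 : ∫ ω, ((0:Ω→ℝ) ω - (μ[(0:Ω→ℝ)|mX]) ω - ttau ω) ^ 2 ∂μ
          = ∫ ω, ttau ω ^ 2 ∂μ := by
        rw [condExp_zero]
        refine integral_congr_ae (Eventually.of_forall fun ω => ?_)
        simp only [Pi.zero_apply]
        ring
      have hz2 : ∫ ω, ((0:Ω→ℝ) ω) ^ 2 ∂μ = 0 := by simp
      rw [hz1, hz2, mul_zero, add_zero] at hmin
      nlinarith [mul_nonneg hρ.le hf2_0]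
    -- step 2 : plug in h = tρ ρ - E to show E = 0 a.e.
    have hcE : μ[tρ ρ - μ[tρ ρ|mX]|mX] =ᵐ[μ] 0 := by
      have h1 : μ[tρ ρ - μ[tρ ρ|mX]|mX] =ᵐ[μ] μ[tρ ρ|mX] - μ[μ[tρ ρ|mX]|mX] :=
        condExp_sub (hf.integrable one_le_two) integrable_condExp mX
      have h2 : μ[μ[tρ ρ|mX]|mX] =ᵐ[μ] μ[tρ ρ|mX] := condExp_condExp_of_le le_rfl hle
      filter_upwards [h1, h2] with ω hω1 hω2
      simp only [Pi.sub_apply, Pi.zero_apply] at *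
      rw [hω1, hω2, sub_self]
    have hEzero : μ[tρ ρ|mX] =ᵐ[μ] 0 := by
      have hmin := htρmin ρ hρ (tρ ρ - μ[tρ ρ|mX]) (hf.sub hE)
      have hfirst : ∫ ω, ((tρ ρ - μ[tρ ρ|mX]) ω - (μ[tρ ρ - μ[tρ ρ|mX]|mX]) ω - ttau ω) ^ 2 ∂μ
          = ∫ ω, (tρ ρ ω - (μ[tρ ρ|mX]) ω - ttau ω) ^ 2 ∂μ := by
        refine integral_congr_ae ?_
        filter_upwards [hcE] with ω hω
        rw [Pi.sub_apply, hω, Pi.zero_apply, sub_zero]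
      rw [hfirst] at hmin
      have hmono : ∫ ω, tρ ρ ω ^ 2 ∂μ ≤ ∫ ω, ((tρ ρ - μ[tρ ρ|mX]) ω) ^ 2 ∂μ := by
        nlinarith
      -- cross term equals second moment of conditional expectation
      have hEf_int : Integrable ((μ[tρ ρ|mX]) * tρ ρ) μ :=
        integrable_mul_of_memLp_two hE hf
      have hpull : μ[(μ[tρ ρ|mX]) * tρ ρ|mX] =ᵐ[μ] (μ[tρ ρ|mX]) * μ[tρ ρ|mX] :=
        condExp_mul_of_stronglyMeasurable_left stronglyMeasurable_condExp hEf_int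
          (hf.integrable one_le_two)
      have hcross : ∫ ω, (μ[tρ ρ|mX]) ω * tρ ρ ω ∂μ = ∫ ω, ((μ[tρ ρ|mX]) ω) ^ 2 ∂μ := by
        calc ∫ ω, (μ[tρ ρ|mX]) ω * tρ ρ ω ∂μ
            = ∫ ω, ((μ[tρ ρ|mX]) * tρ ρ) ω ∂μ := rfl
          _ = ∫ ω, (μ[(μ[tρ ρ|mX]) * tρ ρ|mX]) ω ∂μ := (integral_condExp hle).symm
          _ = ∫ ω, ((μ[tρ ρ|mX]) * μ[tρ ρ|mX]) ω ∂μ := integral_congr_ae hpull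
          _ = ∫ ω, ((μ[tρ ρ|mX]) ω) ^ 2 ∂μ := by
              refine integral_congr_ae (Eventually.of_forall fun ω => ?_)
              simp [Pi.mul_apply, sq]
      have hexp : ∫ ω, ((tρ ρ - μ[tρ ρ|mX]) ω) ^ 2 ∂μ
          = ∫ ω, tρ ρ ω ^ 2 ∂μ - 2 * ∫ ω, (μ[tρ ρ|mX]) ω * tρ ρ ω ∂μ
            + ∫ ω, ((μ[tρ ρ|mX]) ω) ^ 2 ∂μ := by
        have hptw : (fun ω => ((tρ ρ - μ[tρ ρ|mX]) ω) ^ 2)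
            = fun ω => tρ ρ ω ^ 2 - 2 * ((μ[tρ ρ|mX]) ω * tρ ρ ω) + ((μ[tρ ρ|mX]) ω) ^ 2 :=
          funext fun ω => by rw [Pi.sub_apply]; ring
        have i1 : Integrable (fun ω => tρ ρ ω ^ 2) μ := hf.integrable_sq
        have i2 : Integrable (fun ω => 2 * ((μ[tρ ρ|mX]) ω * tρ ρ ω)) μ :=
          (integrable_mul_of_memLp_two hE hf).const_mul 2
        have i3 : Integrable (fun ω => ((μ[tρ ρ|mX]) ω) ^ 2) μ := hE.integrable_sq
        have i12 : Integrable (fun ω => tρ ρ ω ^ 2 - 2 * ((μ[tρ ρ|mX]) ω * tρ ρ ω)) μ :=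
          i1.sub i2
        rw [hptw, integral_add i12 i3, integral_sub i1 i2, integral_const_mul]
      have hE2_eq : ∫ ω, ((μ[tρ ρ|mX]) ω) ^ 2 ∂μ = 0 := by
        have hle0 : ∫ ω, ((μ[tρ ρ|mX]) ω) ^ 2 ∂μ ≤ 0 := by
          rw [hexp, hcross] at hmono; linarith
        exact le_antisymm hle0 (integral_nonneg fun ω => sq_nonneg _)
      have h0 := (integral_eq_zero_iff_of_nonneg (fun ω => sq_nonneg ((μ[tρ ρ|mX]) ω))
        hE.integrable_sq).mp hE2_eq
      filter_upwards [h0] with ω hω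
      simpa [pow_eq_zero_iff] using hω
    have heqA : ∫ ω, (tρ ρ ω - ttau ω) ^ 2 ∂μ
        = ∫ ω, (tρ ρ ω - (μ[tρ ρ|mX]) ω - ttau ω) ^ 2 ∂μ := by
      refine integral_congr_ae ?_
      filter_upwards [hEzero] with ω hω
      simp only [Pi.zero_apply] at hω
      rw [hω, sub_zero]
    exact ⟨hb1, heqA, hb0⟩
  refine ⟨fun ρ hρ => ?_, ?_⟩
  · obtain ⟨hb1, heq, hb0⟩ := key ρ hρ
    have hA0 : 0 ≤ ∫ ω, (tρ ρ ω - (μ[tρ ρ|mX]) ω - ttau ω) ^ 2 ∂μ :=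
      integral_nonneg fun ω => sq_nonneg _
    have hsA := Real.mul_self_sqrt hA0
    have hsB := Real.mul_self_sqrt hB0
    have hAB : Real.sqrt (∫ ω, (tρ ρ ω - (μ[tρ ρ|mX]) ω - ttau ω) ^ 2 ∂μ)
        ≤ Real.sqrt (∫ ω, ttau ω ^ 2 ∂μ) := Real.sqrt_le_sqrt hb0
    have hAρB : Real.sqrt (∫ ω, (tρ ρ ω - (μ[tρ ρ|mX]) ω - ttau ω) ^ 2 ∂μ)
        ≤ Real.sqrt ρ * Real.sqrt (∫ ω, ttau ω ^ 2 ∂μ) := by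
      rw [← Real.sqrt_mul hρ.le]
      exact Real.sqrt_le_sqrt hb1
    refine ⟨hb1, ?_, ?_⟩
    · rw [heq]
      nlinarith [Real.sqrt_nonneg (∫ ω, (tρ ρ ω - (μ[tρ ρ|mX]) ω - ttau ω) ^ 2 ∂μ),
        Real.sqrt_nonneg (∫ ω, ttau ω ^ 2 ∂μ)]
    · rw [heq]
      nlinarith [Real.sqrt_nonneg (∫ ω, (tρ ρ ω - (μ[tρ ρ|mX]) ω - ttau ω) ^ 2 ∂μ),
        Real.sqrt_nonneg (∫ ω, ttau ω ^ 2 ∂μ), Real.sqrt_nonneg ρ]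
  · have htendsto : Tendsto (fun ρ : ℝ => 2 * Real.sqrt ρ * ∫ ω, ttau ω ^ 2 ∂μ)
        (nhdsWithin 0 (Set.Ioi 0)) (nhds 0) := by
      have hc : Tendsto (fun ρ : ℝ => 2 * Real.sqrt ρ * ∫ ω, ttau ω ^ 2 ∂μ) (nhds 0)
          (nhds (2 * Real.sqrt 0 * ∫ ω, ttau ω ^ 2 ∂μ)) :=
        ((continuous_const.mul Real.continuous_sqrt).mul continuous_const).tendsto 0
      simpa using hc.mono_left nhdsWithin_le_nhds
    refine squeeze_zero' ?_ ?_ htendsto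
    · filter_upwards [self_mem_nhdsWithin] with ρ hρ
      exact integral_nonneg fun ω => sq_nonneg _
    · filter_upwards [self_mem_nhdsWithin] with ρ hρ
      obtain ⟨hb1, heq, hb0⟩ := key ρ hρ
      have hA0 : 0 ≤ ∫ ω, (tρ ρ ω - (μ[tρ ρ|mX]) ω - ttau ω) ^ 2 ∂μ :=
        integral_nonneg fun ω => sq_nonneg _
      have hsA := Real.mul_self_sqrt hA0
      have hsB := Real.mul_self_sqrt hB0
      have hAB : Real.sqrt (∫ ω, (tρ ρ ω - (μ[tρ ρ|mX]) ω - ttau ω) ^ 2 ∂μ)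
          ≤ Real.sqrt (∫ ω, ttau ω ^ 2 ∂μ) := Real.sqrt_le_sqrt hb0
      have hAρB : Real.sqrt (∫ ω, (tρ ρ ω - (μ[tρ ρ|mX]) ω - ttau ω) ^ 2 ∂μ)
          ≤ Real.sqrt ρ * Real.sqrt (∫ ω, ttau ω ^ 2 ∂μ) := by
        rw [← Real.sqrt_mul (le_of_lt hρ)]
        exact Real.sqrt_le_sqrt hb1
      rw [heq]
      nlinarith [Real.sqrt_nonneg (∫ ω, (tρ ρ ω - (μ[tρ ρ|mX]) ω - ttau ω) ^ 2 ∂μ),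
        Real.sqrt_nonneg (∫ ω, ttau ω ^ 2 ∂μ), Real.sqrt_nonneg ρ]
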